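/- Let H1 and H2 be complex Hilbert spaces with H2 finite-dimensional and nonzero. If T = T1 ⊗ T2 is a bounded operator on H1 ⊗ H2 (with T1 bounded on H1 and T2 a linear map on H2) that is selfadjoint and satisfies T² = 1, then there exist a selfadjoint operator T̃1 on H1 with T̃1² = 1 and a selfadjoint operator T̃2 on H2 with T̃2² = 1 such that T = T̃1 ⊗ T̃2. -/

import Mathlib

open scoped TensorProduct InnerProductSpace

private lemma extract_left {H1 H2 : Type*} [AddCommGroup H1] [Module ℂ H1]
    [AddCommGroup H2] [Module ℂ H2] (ψ : H2 →ₗ[ℂ] ℂ)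
    {x x' : H1} {y y' : H2} (h : x ⊗ₜ[ℂ] y = x' ⊗ₜ[ℂ] y') :
    ψ y • x = ψ y' • x' := by
  have := congrArg ((TensorProduct.rid ℂ H1).toLinearMap.comp (LinearMap.lTensor H1 ψ)) h
  simpa using this

private lemma extract_right {H1 H2 : Type*} [AddCommGroup H1] [Module ℂ H1]
    [AddCommGroup H2] [Module ℂ H2] (χ : H1 →ₗ[ℂ] ℂ)
    {x x' : H1} {y y' : H2} (h : x ⊗ₜ[ℂ] y = x' ⊗ₜ[ℂ] y') :
    χ x • y = χ x' • y' := by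
  have := congrArg ((TensorProduct.lid ℂ H2).toLinearMap.comp (LinearMap.rTensor H2 χ)) h
  simpa using this

private lemma exists_dual {H : Type*} [NormedAddCommGroup H] [InnerProductSpace ℂ H]
    {v : H} (hv : v ≠ 0) : ∃ ψ : H →ₗ[ℂ] ℂ, ψ v = 1 := by
  refine ⟨((‖v‖ : ℂ) ^ 2)⁻¹ • (innerSL ℂ v : H →ₗ[ℂ] ℂ), ?_⟩
  have hn : ((‖v‖ : ℂ)) ≠ 0 := by
    exact_mod_cast (norm_ne_zero_iff.mpr hv)
  simp [inner_self_eq_norm_sq_to_K]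
  field_simp

/-- A selfadjoint tensor-product operator `T = T1 ⊗ T2` squaring to the
identity on `H1 ⊗ H2` (with `H2` finite-dimensional and nonzero) factors as a tensor
product of selfadjoint operators each squaring to the identity.
Selfadjointness of `T1 ⊗ T2` is encoded as `T1† ⊗ T2† = T1 ⊗ T2`. -/
theorem stmt0
    {H1 : Type*} [NormedAddCommGroup H1] [InnerProductSpace ℂ H1] [CompleteSpace H1]
    {H2 : Type*} [NormedAddCommGroup H2] [InnerProductSpace ℂ H2]
    [FiniteDimensional ℂ H2] [Nontrivial H2]
    (T1 : H1 →L[ℂ] H1) (T2 : H2 →ₗ[ℂ] H2) (hT1 : T1 ≠ 0) (hT2 : T2 ≠ 0)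
    (hsa : TensorProduct.map ((ContinuousLinearMap.adjoint T1) : H1 →ₗ[ℂ] H1)
        (LinearMap.adjoint T2)
      = TensorProduct.map (T1 : H1 →ₗ[ℂ] H1) T2)
    (hsq : (TensorProduct.map (T1 : H1 →ₗ[ℂ] H1) T2) ∘ₗ
        (TensorProduct.map (T1 : H1 →ₗ[ℂ] H1) T2) = LinearMap.id) :
    ∃ (S1 : H1 →L[ℂ] H1) (S2 : H2 →ₗ[ℂ] H2),
      IsSelfAdjoint S1 ∧ S1 * S1 = 1 ∧
      LinearMap.IsSymmetric S2 ∧ S2 ∘ₗ S2 = LinearMap.id ∧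
      TensorProduct.map (S1 : H1 →ₗ[ℂ] H1) S2
        = TensorProduct.map (T1 : H1 →ₗ[ℂ] H1) T2 := by
  obtain ⟨x0, hx0⟩ : ∃ x, T1 x ≠ 0 := by
    by_contra h
    push_neg at h
    exact hT1 (by ext x; simpa using h x)
  obtain ⟨y0, hy0⟩ : ∃ y, T2 y ≠ 0 := by
    by_contra h
    push_neg at h
    exact hT2 (by ext y; simpa using h y)
  have hx0' : x0 ≠ 0 := fun h => hx0 (by simp [h])
  have hy0' : y0 ≠ 0 := fun h => hy0 (by simp [h])
  obtain ⟨ψ, hψ⟩ := exists_dual hy0'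
  obtain ⟨χ, hχ⟩ := exists_dual hx0'
  obtain ⟨ψ1, hψ1⟩ := exists_dual hy0
  obtain ⟨χ1, hχ1⟩ := exists_dual hx0
  have hsq' : ∀ (x : H1) (y : H2), T1 (T1 x) ⊗ₜ[ℂ] (T2 (T2 y)) = x ⊗ₜ[ℂ] y := by
    intro x y
    have := LinearMap.congr_fun hsq (x ⊗ₜ[ℂ] y)
    simpa using this
  have hsa' : ∀ (x : H1) (y : H2),
      (ContinuousLinearMap.adjoint T1 x) ⊗ₜ[ℂ] (LinearMap.adjoint T2 y)
        = (T1 x) ⊗ₜ[ℂ] (T2 y) := by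
    intro x y
    have := LinearMap.congr_fun hsa (x ⊗ₜ[ℂ] y)
    simpa using this
  set c : ℂ := ψ (T2 (T2 y0)) with hc_def
  have hc : ∀ x, c • T1 (T1 x) = x := by
    intro x
    have := extract_left ψ (hsq' x y0)
    rwa [hψ, one_smul] at this
  have hc0 : c ≠ 0 := by
    intro h
    have := hc x0
    rw [h, zero_smul] at this
    exact hx0' this.symm
  have hT1sq : ∀ x, T1 (T1 x) = c⁻¹ • x := by
    intro x
    calc T1 (T1 x) = c⁻¹ • (c • T1 (T1 x)) := by
          rw [smul_smul, inv_mul_cancel₀ hc0, one_smul]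
      _ = c⁻¹ • x := by rw [hc x]
  have hT2sq : ∀ y, T2 (T2 y) = c • y := by
    intro y
    have h1 := hsq' x0 y
    rw [hT1sq x0, TensorProduct.smul_tmul] at h1
    have h2 := extract_right χ h1
    simp only [hχ, one_smul] at h2
    calc T2 (T2 y) = c • (c⁻¹ • T2 (T2 y)) := by
          rw [smul_smul, mul_inv_cancel₀ hc0, one_smul]
      _ = c • y := by rw [h2]
  set μ : ℂ := ψ1 (LinearMap.adjoint T2 y0) with hμ_def
  have hμ : ∀ x, μ • ContinuousLinearMap.adjoint T1 x = T1 x := by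
    intro x
    have := extract_left ψ1 (hsa' x y0)
    rwa [hψ1, one_smul] at this
  have hμ0 : μ ≠ 0 := by
    intro h
    have := hμ x0
    rw [h, zero_smul] at this
    exact hx0 this.symm
  have hadT1 : ∀ x, ContinuousLinearMap.adjoint T1 x = μ⁻¹ • T1 x := by
    intro x
    calc ContinuousLinearMap.adjoint T1 x
        = μ⁻¹ • (μ • ContinuousLinearMap.adjoint T1 x) := by
          rw [smul_smul, inv_mul_cancel₀ hμ0, one_smul]
      _ = μ⁻¹ • T1 x := by rw [hμ x]
  have hadT2 : ∀ y, LinearMap.adjoint T2 y = μ • T2 y := by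
    intro y
    have h1 := hsa' x0 y
    rw [hadT1 x0, TensorProduct.smul_tmul] at h1
    have h2 := extract_right χ1 h1
    simp only [hχ1, one_smul] at h2
    calc LinearMap.adjoint T2 y = μ • (μ⁻¹ • LinearMap.adjoint T2 y) := by
          rw [smul_smul, mul_inv_cancel₀ hμ0, one_smul]
      _ = μ • T2 y := by rw [h2]
  set lam : ℂ := μ⁻¹ with hlam_def
  have hlam0 : lam ≠ 0 := inv_ne_zero hμ0
  have hadT1' : ContinuousLinearMap.adjoint T1 = lam • T1 := by
    ext x; simp [hadT1 x]
  have hunit : (starRingEnd ℂ) lam * lam = 1 := by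
    have h1 : T1 = (starRingEnd ℂ) lam • (lam • T1) := by
      conv_lhs => rw [← ContinuousLinearMap.adjoint_adjoint T1]
      rw [hadT1', map_smulₛₗ, hadT1']
    have h2 : ((starRingEnd ℂ) lam * lam) • T1 = (1 : ℂ) • T1 := by
      rw [one_smul, mul_smul]; exact h1.symm
    by_contra hne
    have h3 := sub_eq_zero.mpr h2
    rw [← sub_smul] at h3
    rcases smul_eq_zero.mp h3 with h | h
    · exact hne (sub_eq_zero.mp h)
    · exact hT1 h
  set a : ℂ := c⁻¹ with ha_def
  have ha0 : a ≠ 0 := inv_ne_zero hc0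
  have hkey : lam * a * ((‖x0‖ : ℂ) ^ 2) = (‖T1 x0‖ : ℂ) ^ 2 := by
    have h1 : ContinuousLinearMap.adjoint T1 (T1 x0) = (lam * a) • x0 := by
      rw [hadT1, hT1sq, smul_smul]
    have h2 : (inner ℂ x0 (ContinuousLinearMap.adjoint T1 (T1 x0)) : ℂ)
        = inner ℂ (T1 x0) (T1 x0) := ContinuousLinearMap.adjoint_inner_right T1 _ _
    rw [h1, inner_smul_right, inner_self_eq_norm_sq_to_K, inner_self_eq_norm_sq_to_K] at h2
    exact h2
  set r : ℝ := ‖T1 x0‖ ^ 2 / ‖x0‖ ^ 2 with hr_def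
  have hrpos : 0 < r :=
    div_pos (pow_pos (norm_pos_iff.mpr hx0) 2) (pow_pos (norm_pos_iff.mpr hx0') 2)
  have hn0 : ((‖x0‖ : ℂ) ^ 2) ≠ 0 := by
    have : (‖x0‖ : ℂ) ≠ 0 := by exact_mod_cast norm_ne_zero_iff.mpr hx0'
    exact pow_ne_zero 2 this
  have hla : lam * a = (r : ℂ) := by
    rw [hr_def]
    push_cast
    rw [eq_div_iff hn0]
    linear_combination hkey
  have hr0 : (r : ℂ) ≠ 0 := by exact_mod_cast hrpos.ne'
  obtain ⟨z, hz⟩ : ∃ z : ℂ, z ^ 2 = lam :=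
    IsAlgClosed.exists_pow_nat_eq lam (n := 2) (by norm_num)
  have hz1 : (starRingEnd ℂ) z * z = 1 := by
    have hsq2 : ((starRingEnd ℂ) z * z) ^ 2 = 1 := by
      have h : (starRingEnd ℂ) (z ^ 2) * z ^ 2 = 1 := by rw [hz]; exact hunit
      rw [map_pow] at h
      linear_combination h
    have hre : (starRingEnd ℂ) z * z = ((Complex.normSq z : ℝ) : ℂ) := by
      rw [mul_comm, Complex.mul_conj]
    rw [hre] at hsq2 ⊢
    have h4 : (Complex.normSq z : ℝ) ^ 2 = 1 := by exact_mod_cast hsq2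
    have hnn : (0 : ℝ) ≤ Complex.normSq z := Complex.normSq_nonneg z
    have h5 : Complex.normSq z = 1 := by nlinarith
    rw [h5]; norm_num
  have hz0 : z ≠ 0 := by
    intro h
    rw [h, map_zero, zero_mul] at hz1
    exact zero_ne_one hz1
  set s : ℝ := Real.sqrt r with hs_def
  have hs_pos : 0 < s := Real.sqrt_pos.mpr hrpos
  have hs_sq : (s : ℂ) ^ 2 = (r : ℂ) := by
    have : s ^ 2 = r := Real.sq_sqrt hrpos.le
    exact_mod_cast this
  have hsC0 : (s : ℂ) ≠ 0 := by exact_mod_cast hs_pos.ne'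
  set α : ℂ := z / (s : ℂ) with hα_def
  have hα0 : α ≠ 0 := div_ne_zero hz0 hsC0
  have hconjα : (starRingEnd ℂ) α * lam = α := by
    rw [hα_def, ← hz, map_div₀, Complex.conj_ofReal]
    field_simp
    linear_combination hz1
  have hα_sq : α ^ 2 * a = 1 := by
    rw [hα_def, div_pow, hz, hs_sq]
    field_simp
    linear_combination hla
  have hμ_lam : μ = lam⁻¹ := by rw [hlam_def, inv_inv]
  have hscal : (starRingEnd ℂ) α⁻¹ * μ = α⁻¹ := by
    rw [map_inv₀, hμ_lam, ← mul_inv, hconjα]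
  have hα2 : α ^ 2 = c := by
    have h : α ^ 2 * c⁻¹ = 1 := by rw [← ha_def]; exact hα_sq
    field_simp at h
    exact h
  refine ⟨α • T1, α⁻¹ • T2, ?_, ?_, ?_, ?_, ?_⟩
  · rw [IsSelfAdjoint, ContinuousLinearMap.star_eq_adjoint, map_smulₛₗ, hadT1',
      smul_smul, hconjα]
  · ext x
    simp only [ContinuousLinearMap.mul_apply, ContinuousLinearMap.smul_apply,
      ContinuousLinearMap.one_apply, map_smul]
    rw [hT1sq, smul_smul, smul_smul]
    rw [show α * α * a = α ^ 2 * a by ring, hα_sq, one_smul]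
  · intro u v
    have hadj : LinearMap.adjoint (α⁻¹ • T2) = α⁻¹ • T2 := by
      rw [map_smulₛₗ]
      ext y
      simp only [LinearMap.smul_apply, hadT2 y, smul_smul]
      rw [hscal]
    calc inner ℂ ((α⁻¹ • T2) u) v = inner ℂ u (LinearMap.adjoint (α⁻¹ • T2) v) := by
          rw [LinearMap.adjoint_inner_right]
      _ = inner ℂ u ((α⁻¹ • T2) v) := by rw [hadj]
  · ext y
    simp only [LinearMap.comp_apply, LinearMap.smul_apply, map_smul, LinearMap.id_apply]
    rw [hT2sq, smul_smul, smul_smul]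
    have h6 : α⁻¹ * (α⁻¹ * c) = 1 := by
      rw [← hα2]
      field_simp
    rw [show α⁻¹ * α⁻¹ * c = α⁻¹ * (α⁻¹ * c) by ring] at *
    rw [h6, one_smul]
  · apply TensorProduct.ext'
    intro x y
    simp only [TensorProduct.map_tmul, ContinuousLinearMap.coe_smul,
      LinearMap.smul_apply, ContinuousLinearMap.coe_coe]
    rw [TensorProduct.smul_tmul, smul_smul, mul_inv_cancel₀ hα0, one_smul]
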